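/- Let S ⊆ {0,1}^n be a binary space (closed under mod-2 addition) whose points do not all agree on a coordinate, and suppose S has GF(2)-rank r. Then there is a subset S' ⊆ S which is itself a binary space of rank at most r, whose points do not all agree on a coordinate, and which, after deleting duplicated and constant coordinates, is the cocycle space of a projective geometry PG(m-1,2) for some m ≤ r. -/

import Mathlib

/-- The ground set of `PG(m-1,2)`: the nonzero vectors of `GF(2)^m`. -/
abbrev PGpt (m : ℕ) := {v : Fin m → ZMod 2 // v ≠ 0}

/-- The cocycle space of `PG(m-1,2)`, viewed as a set of 0-1 points indexed by the ground
set: all maps `v ↦ u · v` for `u ∈ GF(2)^m`. -/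
def PGcocycleSpace (m : ℕ) : Set (PGpt m → ZMod 2) :=
  {q | ∃ u : Fin m → ZMod 2, ∀ v : PGpt m, q v = ∑ i, u i * v.1 i}

lemma key_lemma {r n : ℕ} (c : Fin n → (Fin r → ZMod 2)) (hc : ∀ i, c i ≠ 0) :
    ∃ m ≤ r, ∃ L : (Fin r → ZMod 2) →ₗ[ZMod 2] (Fin m → ZMod 2),
      (∀ i, L (c i) ≠ 0) ∧ (∀ w : Fin m → ZMod 2, w ≠ 0 → ∃ i, L (c i) = w) := by
  classical
  have hne : ({K : Submodule (ZMod 2) (Fin r → ZMod 2) | ∀ i, c i ∉ K}).Nonempty := by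
    refine ⟨⊥, fun i hi => hc i (by simpa using hi)⟩
  obtain ⟨K, hK, hmax⟩ :=
    (set_has_maximal_iff_noetherian.mpr inferInstance) _ hne
  have hcover : ∀ x : Fin r → ZMod 2, x ∉ K → ∃ i, c i - x ∈ K := by
    intro x hx
    have hlt : K < K ⊔ Submodule.span (ZMod 2) {x} := by
      refine lt_of_le_of_ne le_sup_left ?_
      intro h
      exact hx (h ▸ (le_sup_right : Submodule.span (ZMod 2) {x} ≤ _)
        (Submodule.mem_span_singleton_self x))
    have hni : ¬ (∀ i, c i ∉ K ⊔ Submodule.span (ZMod 2) {x}) := fun h => hmax _ h hlt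
    push_neg at hni
    obtain ⟨i, hi⟩ := hni
    rw [Submodule.mem_sup] at hi
    obtain ⟨y, hy, z, hz, hyz⟩ := hi
    rw [Submodule.mem_span_singleton] at hz
    obtain ⟨t, rfl⟩ := hz
    have ht : t = 0 ∨ t = 1 := by fin_cases t; exacts [Or.inl rfl, Or.inr rfl]
    rcases ht with rfl | rfl
    · exact absurd (by rw [← hyz]; simpa using hy) (hK i)
    · refine ⟨i, ?_⟩
      rw [← hyz]
      simpa using hy
  set m := Module.finrank (ZMod 2) ((Fin r → ZMod 2) ⧸ K) with hm
  have hmr : m ≤ r := by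
    have := Submodule.finrank_quotient_le K
    rwa [Module.finrank_fin_fun] at this
  have φ : ((Fin r → ZMod 2) ⧸ K) ≃ₗ[ZMod 2] (Fin m → ZMod 2) :=
    (Module.finBasis (ZMod 2) _).equivFun
  refine ⟨m, hmr, φ.toLinearMap ∘ₗ K.mkQ, ?_, ?_⟩
  · intro i h
    simp only [LinearMap.comp_apply, LinearEquiv.coe_coe] at h
    have h2 : K.mkQ (c i) = 0 := φ.injective (by simpa using h)
    rw [Submodule.mkQ_apply, Submodule.Quotient.mk_eq_zero] at h2
    exact hK i h2
  · intro w hw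
    obtain ⟨x, hx⟩ := K.mkQ_surjective (φ.symm w)
    have hxK : x ∉ K := by
      intro hxK
      apply hw
      have h0 : φ.symm w = 0 := by
        rw [← hx, Submodule.mkQ_apply, Submodule.Quotient.mk_eq_zero]; exact hxK
      simpa using congrArg φ h0
    obtain ⟨i, hi⟩ := hcover x hxK
    refine ⟨i, ?_⟩
    have heq : K.mkQ (c i) = K.mkQ x := by
      rw [Submodule.mkQ_apply, Submodule.mkQ_apply, Submodule.Quotient.eq]
      exact hi
    simp only [LinearMap.comp_apply, LinearEquiv.coe_coe, heq, hx]
    simp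

/-- Let `S ⊆ {0,1}^n` be a binary space of GF(2)-rank `r` whose points do not
all agree on a coordinate. Then there is a binary subspace `S' ⊆ S` whose points do not all
agree on a coordinate such that, after deleting duplicated and constant coordinates
(keeping an injectively chosen representative coordinate `g w` for each element `w` of the
projective geometry), `S'` is (bijectively, via projection to the representative coordinates)
the cocycle space of `PG(m-1,2)` for some `m ≤ r`. -/
theorem stmt_17 {n r : ℕ} (S : Set (Fin n → ZMod 2))
    (hspace : ∀ a ∈ S, ∀ b ∈ S, a + b ∈ S) (h0 : 0 ∈ S)
    (hagree : ¬ ∃ (i : Fin n) (a : ZMod 2), ∀ p ∈ S, p i = a)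
    (hrank : ∃ B : Finset (Fin n → ZMod 2), ↑B ⊆ S ∧ B.card = r ∧
      LinearIndependent (ZMod 2) (Subtype.val : (↑B : Set (Fin n → ZMod 2)) → (Fin n → ZMod 2)) ∧
      S = ↑(Submodule.span (ZMod 2) (B : Set (Fin n → ZMod 2)))) :
    ∃ S' ⊆ S, (∀ a ∈ S', ∀ b ∈ S', a + b ∈ S') ∧ 0 ∈ S' ∧
      (¬ ∃ (i : Fin n) (a : ZMod 2), ∀ p ∈ S', p i = a) ∧
      ∃ m ≤ r, ∃ g : PGpt m → Fin n,
        Function.Injective g ∧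
        (∀ j : Fin n, (∃ a : ZMod 2, ∀ p ∈ S', p j = a) ∨
          ∃ w : PGpt m, (∀ p ∈ S', p j = p (g w)) ∨ (∀ p ∈ S', p j = p (g w) + 1)) ∧
        Set.BijOn (fun (p : Fin n → ZMod 2) (w : PGpt m) => p (g w)) S'
          (PGcocycleSpace m) := by
  classical
  obtain ⟨B, hBS, hcard, hindep, hspan⟩ := hrank
  set e := B.equivFinOfCardEq hcard with he
  set b : Fin r → (Fin n → ZMod 2) := fun k => (e.symm k : Fin n → ZMod 2) with hb
  have hrange : Set.range b = ↑B := by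
    ext x
    constructor
    · rintro ⟨k, rfl⟩; exact (e.symm k).2
    · intro hx; exact ⟨e ⟨x, hx⟩, by simp [hb]⟩
  have hspan' : S = ↑(Submodule.span (ZMod 2) (Set.range b)) := by rw [hrange, hspan]
  set c : Fin n → (Fin r → ZMod 2) := fun i k => b k i with hcdef
  have hc : ∀ i, c i ≠ 0 := by
    intro i hci
    apply hagree
    refine ⟨i, 0, fun p hp => ?_⟩
    rw [hspan'] at hp
    rw [SetLike.mem_coe, Submodule.mem_span_range_iff_exists_fun] at hp
    obtain ⟨t, rfl⟩ := hp
    have : ∀ k, b k i = 0 := fun k => congrFun hci k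
    simp [Finset.sum_apply, this]
  obtain ⟨m, hmr, L, hL0, hLsurj⟩ := key_lemma c hc
  -- expansion of L
  have hLc : ∀ v : Fin r → ZMod 2, L v = ∑ k, v k • L (Pi.single k 1) := by
    intro v
    conv_lhs => rw [← Finset.univ_sum_single v]
    rw [map_sum]
    refine Finset.sum_congr rfl fun k _ => ?_
    rw [← map_smul]
    congr 1
    rw [← Pi.single_smul, smul_eq_mul, mul_one]
  set a : Fin m → (Fin n → ZMod 2) := fun j i => L (c i) j with ha
  have haS : ∀ j, a j ∈ S := by
    intro j
    rw [hspan', SetLike.mem_coe, Submodule.mem_span_range_iff_exists_fun]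
    refine ⟨fun k => L (Pi.single k 1) j, ?_⟩
    funext i
    rw [Finset.sum_apply]
    have : a j i = L (c i) j := rfl
    rw [this, hLc (c i), Finset.sum_apply]
    refine Finset.sum_congr rfl fun k _ => ?_
    simp [hcdef, mul_comm]
  set S' : Set (Fin n → ZMod 2) := ↑(Submodule.span (ZMod 2) (Set.range a)) with hS'
  have hmem : ∀ p, p ∈ S' ↔ ∃ t : Fin m → ZMod 2, ∑ j, t j • a j = p := by
    intro p; rw [hS', SetLike.mem_coe, Submodule.mem_span_range_iff_exists_fun]
  have hval : ∀ (t : Fin m → ZMod 2) (i : Fin n),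
      (∑ j, t j • a j) i = ∑ j, t j * L (c i) j := by
    intro t i
    rw [Finset.sum_apply]
    rfl
  -- g
  have hgex : ∀ w : PGpt m, ∃ i, L (c i) = w.1 := fun w => hLsurj w.1 w.2
  set g : PGpt m → Fin n := fun w => (hgex w).choose with hgdef
  have hg : ∀ w, L (c (g w)) = w.1 := fun w => (hgex w).choose_spec
  refine ⟨S', ?_, ?_, ?_, ?_, m, hmr, g, ?_, ?_, ?_, ?_, ?_⟩
  · -- S' ⊆ S
    rw [hspan]
    intro p hp
    refine Submodule.span_le.mpr ?_ hp
    rintro x ⟨j, rfl⟩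
    have := haS j
    rwa [hspan, SetLike.mem_coe] at this
  · intro x hx y hy
    rw [hS', SetLike.mem_coe] at hx hy ⊢
    exact Submodule.add_mem _ hx hy
  · rw [hS', SetLike.mem_coe]; exact Submodule.zero_mem _
  · -- no agreement on S'
    rintro ⟨i, a0, hall⟩
    have ha0 : a0 = 0 := by
      have h00 : (0 : Fin n → ZMod 2) ∈ S' := by
        rw [hS', SetLike.mem_coe]; exact Submodule.zero_mem _
      have := hall 0 h00
      simpa using this.symm
    obtain ⟨j0, hj0⟩ := Function.ne_iff.mp (hL0 i)
    have hp : (∑ j, (Pi.single j0 1 : Fin m → ZMod 2) j • a j) ∈ S' :=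
      (hmem _).mpr ⟨_, rfl⟩
    have := hall _ hp
    rw [hval, ha0] at this
    apply hj0
    rwa [Finset.sum_eq_single j0 (fun j _ hj => by simp [Pi.single_apply, hj])
      (by simp), Pi.single_eq_same, one_mul] at this
  · -- injectivity of g
    intro w w' hww
    apply Subtype.ext
    rw [← hg w, ← hg w', hww]
  · -- every coordinate constant or duplicate
    intro j
    right
    refine ⟨⟨L (c j), hL0 j⟩, Or.inl fun p hp => ?_⟩
    obtain ⟨t, rfl⟩ := (hmem p).mp hp
    rw [hval, hval, hg]
  · -- MapsTo
    intro p hp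
    obtain ⟨t, rfl⟩ := (hmem p).mp hp
    refine ⟨t, fun v => ?_⟩
    simp only
    rw [hval, hg]
  · -- InjOn
    intro p hp p' hp' hpp
    obtain ⟨t, rfl⟩ := (hmem p).mp hp
    obtain ⟨t', rfl⟩ := (hmem p').mp hp'
    have ht : t = t' := by
      funext j0
      have hw : (Pi.single j0 1 : Fin m → ZMod 2) ≠ 0 := by
        intro h
        have := congrFun h j0
        simp at this
      have := congrFun hpp ⟨Pi.single j0 1, hw⟩
      simp only at this
      rw [hval, hval, hg] at this
      simp only at this
      rwa [Finset.sum_eq_single j0 (fun j _ hj => by simp [Pi.single_apply, hj]) (by simp),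
        Finset.sum_eq_single j0 (fun j _ hj => by simp [Pi.single_apply, hj]) (by simp),
        Pi.single_eq_same, mul_one, mul_one] at this
    rw [ht]
  · -- SurjOn
    rintro q ⟨u, hq⟩
    refine ⟨∑ j, u j • a j, (hmem _).mpr ⟨u, rfl⟩, ?_⟩
    funext w
    simp only
    rw [hval, hg, hq w]
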